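/- Let K be a number field, R = 𝓞_K its ring of integers, M₀ a finitely generated R-module, ι a finite type, and v : ι → M₀ a realization whose image generates M₀ (i.e., Submodule.span R {v_i : i ∈ ι} = ⊤, so M(ι) = 0). If i ∈ ι is a coloop (rk(ι∖{i}) = r − 1 where r = rk(ι)), then the evaluated Tutte polynomial satisfies T̃_{(M₀,v)}(x,y) = x · T̃_{(M₀/span{v_i}, π∘v|_{ι∖{i}})}(x,y), where π : M₀ → M₀ / Submodule.span R {v_i} is the canonical quotient map. -/

import Mathlib

open scoped TensorProduct
open NumberField

/-- The rank of a finite subset `A` of the ground set: the dimension over `K` of the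
`K`-span of the images of `v i` (`i ∈ A`) in `M ⊗[𝓞 K] K`. -/
noncomputable def rkFun (K : Type) [Field K] [NumberField K]
    {ι M : Type} [AddCommGroup M] [Module (𝓞 K) M]
    (v : ι → M) (A : Finset ι) : ℕ :=
  Module.finrank K
    (Submodule.span K ((fun i => (1 : K) ⊗ₜ[𝓞 K] v i) '' (A : Set ι)))

/-- The multiplicity `m(A)`: the cardinality of the torsion submodule of
`M(A) = M ⧸ span (𝓞 K) (v '' A)`. -/
noncomputable def mFun (K : Type) [Field K] [NumberField K]
    {ι M : Type} [AddCommGroup M] [Module (𝓞 K) M]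
    (v : ι → M) (A : Finset ι) : ℕ :=
  Nat.card (Submodule.torsion (𝓞 K) (M ⧸ Submodule.span (𝓞 K) (v '' (A : Set ι))))

/-- The evaluated Tutte polynomial
`T̃(x,y) = Σ_{A ⊆ ι} m(A) (x-1)^(r - rk A) (y-1)^(|A| - rk A) ∈ ℤ[x,y]`,
realized as a multivariate polynomial in the two variables `X 0 = x`, `X 1 = y`. -/
noncomputable def tuttePoly (K : Type) [Field K] [NumberField K]
    {ι M : Type} [Fintype ι] [AddCommGroup M] [Module (𝓞 K) M]
    (v : ι → M) : MvPolynomial (Fin 2) ℤ :=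
  ∑ A : Finset ι,
    (mFun K v A : MvPolynomial (Fin 2) ℤ) *
      (MvPolynomial.X 0 - 1) ^ (rkFun K v Finset.univ - rkFun K v A) *
      (MvPolynomial.X 1 - 1) ^ (A.card - rkFun K v A)


namespace TutteColoop
set_option linter.unusedSectionVars false

open Submodule Module Finset

section VS
variable {K : Type} [Field K]

lemma finrank_span_insert {V : Type*} [AddCommGroup V] [Module K V] {s : Set V}
    (hs : s.Finite) {x : V} (hx : x ∉ Submodule.span K s) :
    finrank K (Submodule.span K (insert x s)) = finrank K (Submodule.span K s) + 1 := by
  have hx0 : x ≠ 0 := fun h => hx (h ▸ (Submodule.span K s).zero_mem)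
  haveI : FiniteDimensional K (Submodule.span K s) := FiniteDimensional.span_of_finite K hs
  haveI : FiniteDimensional K (Submodule.span K {x}) :=
    FiniteDimensional.span_of_finite K (Set.finite_singleton x)
  have hinf : Submodule.span K {x} ⊓ Submodule.span K s = ⊥ := by
    rw [eq_bot_iff]
    rintro y ⟨hy1, hy2⟩
    obtain ⟨c, rfl⟩ := Submodule.mem_span_singleton.mp hy1
    rcases eq_or_ne c 0 with rfl | hc
    · simp
    · exact absurd (Submodule.smul_mem _ c⁻¹ hy2) (by rwa [inv_smul_smul₀ hc])
  have hsup := Submodule.finrank_sup_add_finrank_inf_eq (Submodule.span K {x})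
    (Submodule.span K s)
  rw [hinf, finrank_bot, add_zero, finrank_span_singleton hx0] at hsup
  rw [Submodule.span_insert, hsup, add_comm]

end VS

section NF

variable {K : Type} [Field K] [NumberField K]

lemma map_spanR_mem {M N : Type*} [AddCommGroup M] [Module (𝓞 K) M]
    [AddCommGroup N] [Module K N] [Module (𝓞 K) N] [IsScalarTower (𝓞 K) K N]
    (f : M →ₗ[𝓞 K] N) (s : Set M) {x : M} (hx : x ∈ Submodule.span (𝓞 K) s) :
    f x ∈ Submodule.span K (f '' s) := by
  induction hx using Submodule.span_induction with
  | mem y hy => exact Submodule.subset_span ⟨y, hy, rfl⟩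
  | zero => simp
  | add a b _ _ ha hb => rw [map_add]; exact add_mem ha hb
  | smul c a _ ha =>
      rw [map_smul, ← algebraMap_smul K c (f a)]
      exact Submodule.smul_mem _ _ ha

lemma card_torsion_eq {N N' : Type*} [AddCommGroup N] [Module (𝓞 K) N]
    [AddCommGroup N'] [Module (𝓞 K) N'] (e : N ≃ₗ[𝓞 K] N') :
    Nat.card (Submodule.torsion (𝓞 K) N) = Nat.card (Submodule.torsion (𝓞 K) N') := by
  refine Nat.card_congr ⟨fun x => ⟨e x.1, ?_⟩, fun y => ⟨e.symm y.1, ?_⟩, fun x => ?_, fun y => ?_⟩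
  · obtain ⟨a, ha⟩ := (Submodule.mem_torsion_iff _).mp x.2
    exact (Submodule.mem_torsion_iff _).mpr
      ⟨a, by rw [Submonoid.smul_def] at ha ⊢; rw [← map_smul, ha, map_zero]⟩
  · obtain ⟨a, ha⟩ := (Submodule.mem_torsion_iff _).mp y.2
    exact (Submodule.mem_torsion_iff _).mpr
      ⟨a, by rw [Submonoid.smul_def] at ha ⊢; rw [← map_smul, ha, map_zero]⟩
  · ext; simp
  · ext; simp

end NF

section Main

variable (K : Type) [Field K] [NumberField K]
  {ι : Type} [Fintype ι] [DecidableEq ι]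
  {M₀ : Type} [AddCommGroup M₀] [Module (𝓞 K) M₀]
  (v : ι → M₀) (i : ι)

/-- image set in `K ⊗ M₀` of a finset -/
local notation "img" A => ((fun j => (1 : K) ⊗ₜ[𝓞 K] v j) '' ((A : Finset ι) : Set ι))

/-- contraction realization -/
noncomputable def vq : {j : ι // j ≠ i} → M₀ ⧸ Submodule.span (𝓞 K) {v i} :=
  fun j => Submodule.Quotient.mk (v (j : ι))

/-- embedding of finsets of the subtype -/
def emb (B : Finset {j : ι // j ≠ i}) : Finset ι := B.map (Function.Embedding.subtype _)

lemma not_mem_emb (B : Finset {j : ι // j ≠ i}) : i ∉ emb i B := by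
  simp [emb]

lemma card_emb (B : Finset {j : ι // j ≠ i}) : (emb i B).card = B.card := Finset.card_map _

lemma emb_univ : emb i (Finset.univ : Finset {j : ι // j ≠ i}) = {i}ᶜ := by
  ext j
  simp [emb]


lemma emb_subtype (A : Finset ι) (hA : i ∉ A) :
    emb i (Finset.subtype (fun j => j ≠ i) A) = A := by
  rw [emb, Finset.subtype_map, Finset.filter_true_of_mem]
  intro x hx
  exact fun h => hA (h ▸ hx)

lemma emb_subtype_erase (A : Finset ι) (hA : i ∈ A) :
    insert i (emb i (Finset.subtype (fun j => j ≠ i) (A.erase i))) = A := by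
  rw [emb, Finset.subtype_map, Finset.filter_true_of_mem, Finset.insert_erase hA]
  intro x hx
  exact (Finset.mem_erase.mp hx).1

lemma rk_mono {ι' M : Type} [AddCommGroup M] [Module (𝓞 K) M] (w : ι' → M)
    {A B : Finset ι'} (h : A ⊆ B) : rkFun K w A ≤ rkFun K w B := by
  haveI : FiniteDimensional K
      (Submodule.span K ((fun j => (1 : K) ⊗ₜ[𝓞 K] w j) '' (B : Set ι'))) :=
    FiniteDimensional.span_of_finite K (B.finite_toSet.image _)
  exact Submodule.finrank_mono (Submodule.span_mono (Set.image_mono h))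

/-- K1: the coloop vector is not in the span of the others. -/
lemma tv_not_mem (hcoloop : rkFun K v {i}ᶜ + 1 = rkFun K v Finset.univ)
    {A : Finset ι} (hA : i ∉ A) :
    (1 : K) ⊗ₜ[𝓞 K] v i ∉
      Submodule.span K ((fun j => (1 : K) ⊗ₜ[𝓞 K] v j) '' (A : Set ι)) := by
  intro hmem
  have hsub : (A : Set ι) ⊆ (({i}ᶜ : Finset ι) : Set ι) := by
    intro x hx
    simp only [Finset.coe_compl, Set.mem_compl_iff, Finset.coe_singleton,
      Set.mem_singleton_iff]
    rintro rfl
    exact hA hx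
  have hmem' : (1 : K) ⊗ₜ[𝓞 K] v i ∈
      Submodule.span K ((fun j => (1 : K) ⊗ₜ[𝓞 K] v j) '' (({i}ᶜ : Finset ι) : Set ι)) :=
    Submodule.span_mono (Set.image_mono hsub) hmem
  have huniv : ((Finset.univ : Finset ι) : Set ι) =
      insert i ((({i}ᶜ : Finset ι) : Set ι)) := by
    ext x
    by_cases hxi : x = i <;> simp [hxi]
  have heq : rkFun K v Finset.univ = rkFun K v {i}ᶜ := by
    unfold rkFun
    rw [huniv, Set.image_insert_eq, Submodule.span_insert_eq_span hmem']
  omega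

lemma rk_insert {A : Finset ι}
    (h : (1 : K) ⊗ₜ[𝓞 K] v i ∉
      Submodule.span K ((fun j => (1 : K) ⊗ₜ[𝓞 K] v j) '' (A : Set ι))) (hA : i ∉ A) :
    rkFun K v (insert i A) = rkFun K v A + 1 := by
  unfold rkFun
  rw [Finset.coe_insert, Set.image_insert_eq]
  exact finrank_span_insert (A.finite_toSet.image _) h

/-- the submodule `L = K·(1 ⊗ v i)` -/
noncomputable def LL : Submodule K (K ⊗[𝓞 K] M₀) :=
  Submodule.span K {(1 : K) ⊗ₜ[𝓞 K] v i}

noncomputable def phi : K ⊗[𝓞 K] M₀ →ₗ[K] K ⊗[𝓞 K] (M₀ ⧸ Submodule.span (𝓞 K) {v i}) :=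
  LinearMap.baseChange K (Submodule.span (𝓞 K) {v i}).mkQ

noncomputable def gV : (M₀ ⧸ Submodule.span (𝓞 K) {v i}) →ₗ[𝓞 K]
    ((K ⊗[𝓞 K] M₀) ⧸ LL K v i) :=
  Submodule.liftQ _ (((LL K v i).mkQ.restrictScalars (𝓞 K)).comp
    ((TensorProduct.mk (𝓞 K) K M₀) 1)) (by
      rw [Submodule.span_le]
      rintro x rfl
      simp only [SetLike.mem_coe, LinearMap.mem_ker, LinearMap.coe_comp,
        LinearMap.coe_restrictScalars, Function.comp_apply, TensorProduct.mk_apply,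
        Submodule.mkQ_apply, Submodule.Quotient.mk_eq_zero]
      exact Submodule.mem_span_singleton_self _)

noncomputable def psi : K ⊗[𝓞 K] (M₀ ⧸ Submodule.span (𝓞 K) {v i}) →ₗ[K]
    ((K ⊗[𝓞 K] M₀) ⧸ LL K v i) :=
  (gV K v i).liftBaseChange K

lemma psi_phi (z : K ⊗[𝓞 K] M₀) : psi K v i (phi K v i z) = (LL K v i).mkQ z := by
  induction z using TensorProduct.induction_on with
  | zero => simp
  | tmul k x =>
      simp only [phi, LinearMap.baseChange_tmul, psi, LinearMap.liftBaseChange_tmul]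
      rw [gV, Submodule.mkQ_apply, Submodule.liftQ_apply]
      simp only [LinearMap.coe_comp, LinearMap.coe_restrictScalars, Function.comp_apply,
        TensorProduct.mk_apply, Submodule.mkQ_apply]
      rw [← Submodule.Quotient.mk_smul, TensorProduct.smul_tmul', smul_eq_mul, mul_one]
  | add a b ha hb => simp [map_add, ha, hb]

lemma phi_inj_on {A : Finset ι}
    (h : (1 : K) ⊗ₜ[𝓞 K] v i ∉
      Submodule.span K ((fun j => (1 : K) ⊗ₜ[𝓞 K] v j) '' (A : Set ι)))
    {z : K ⊗[𝓞 K] M₀}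
    (hz : z ∈ Submodule.span K ((fun j => (1 : K) ⊗ₜ[𝓞 K] v j) '' (A : Set ι)))
    (h0 : phi K v i z = 0) : z = 0 := by
  have h1 : (LL K v i).mkQ z = 0 := by rw [← psi_phi, h0, map_zero]
  rw [Submodule.mkQ_apply, Submodule.Quotient.mk_eq_zero] at h1
  obtain ⟨c, rfl⟩ := Submodule.mem_span_singleton.mp h1
  rcases eq_or_ne c 0 with rfl | hc
  · simp
  · have := Submodule.smul_mem _ c⁻¹ hz
    rw [inv_smul_smul₀ hc] at this
    exact absurd this h
lemma rk_vq (B : Finset {j : ι // j ≠ i})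
    (h : (1 : K) ⊗ₜ[𝓞 K] v i ∉
      Submodule.span K ((fun j => (1 : K) ⊗ₜ[𝓞 K] v j) '' ((emb i B : Finset ι) : Set ι))) :
    rkFun K (vq K v i) B = rkFun K v (emb i B) := by
  classical
  set S := Submodule.span K
    ((fun j => (1 : K) ⊗ₜ[𝓞 K] v j) '' ((emb i B : Finset ι) : Set ι)) with hS
  set χ := (phi K v i).comp S.subtype with hχ
  have hker : Function.Injective χ := by
    rw [injective_iff_map_eq_zero]
    rintro ⟨x, hx⟩ hx0
    have h0 : phi K v i x = 0 := hx0
    have := phi_inj_on K v i h hx h0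
    simpa [Submodule.mk_eq_zero] using this
  have h1 : finrank K S = finrank K (LinearMap.range χ) :=
    (LinearEquiv.ofInjective χ hker).finrank_eq
  have hrange : LinearMap.range χ =
      Submodule.span K ((fun j => (1 : K) ⊗ₜ[𝓞 K] (vq K v i) j) '' (B : Set _)) := by
    have h2 : LinearMap.range χ = S.map (phi K v i) := by
      rw [hχ, LinearMap.range_comp, Submodule.range_subtype]
    rw [h2, hS, Submodule.map_span]
    congr 1
    rw [emb, Finset.coe_map, Set.image_image, Set.image_image]
    apply Set.image_congr
    intro j _
    simp [phi, vq, LinearMap.baseChange_tmul]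
  rw [rkFun, rkFun, ← hS, h1, hrange]

lemma mFun_vq (B : Finset {j : ι // j ≠ i}) :
    mFun K (vq K v i) B = mFun K v (insert i (emb i B)) := by
  classical
  set P := Submodule.span (𝓞 K) {v i} with hP
  set T := Submodule.span (𝓞 K) (v '' ((insert i (emb i B) : Finset ι) : Set ι)) with hT
  have hPT : P ≤ T := by
    rw [hP, Submodule.span_le, Set.singleton_subset_iff]
    exact Submodule.subset_span ⟨i, by simp, rfl⟩
  have h0 : P.mkQ (v i) = 0 := by
    rw [Submodule.mkQ_apply, Submodule.Quotient.mk_eq_zero]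
    exact Submodule.mem_span_singleton_self _
  have hmap : T.map P.mkQ = Submodule.span (𝓞 K) ((vq K v i) '' (B : Set {j : ι // j ≠ i})) := by
    rw [hT, Submodule.map_span, Finset.coe_insert, Set.image_insert_eq, Set.image_insert_eq,
      h0, Submodule.span_insert_zero]
    congr 1
    rw [emb, Finset.coe_map, Set.image_image, Set.image_image]
    apply Set.image_congr
    intro j _
    simp [vq]
  have e : ((M₀ ⧸ P) ⧸ Submodule.span (𝓞 K) ((vq K v i) '' (B : Set {j : ι // j ≠ i})))
      ≃ₗ[𝓞 K] (M₀ ⧸ T) :=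
    (Submodule.quotEquivOfEq _ _ hmap.symm).trans
      (Submodule.quotientQuotientEquivQuotient P T hPT)
  exact card_torsion_eq e


lemma mFun_insert (hgen : Submodule.span (𝓞 K) (Set.range v) = ⊤)
    {A : Finset ι} (hA : i ∉ A)
    (h : (1 : K) ⊗ₜ[𝓞 K] v i ∉
      Submodule.span K ((fun j => (1 : K) ⊗ₜ[𝓞 K] v j) '' (({i}ᶜ : Finset ι) : Set ι))) :
    mFun K v A = mFun K v (insert i A) := by
  classical
  set S₀ := Submodule.span (𝓞 K) (v '' (A : Set ι)) with hS₀
  set S₁ := Submodule.span (𝓞 K) (v '' ((insert i A : Finset ι) : Set ι)) with hS₁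
  have hvi1 : v i ∈ S₁ := Submodule.subset_span ⟨i, by simp, rfl⟩
  have hle : S₀ ≤ S₁ :=
    Submodule.span_mono (Set.image_mono (by rw [Finset.coe_insert]; exact Set.subset_insert _ _))
  set q : (M₀ ⧸ S₀) →ₗ[𝓞 K] (M₀ ⧸ S₁) :=
    Submodule.mapQ S₀ S₁ LinearMap.id hle with hq
  have hq_mk : ∀ m : M₀, q (Submodule.Quotient.mk m) = Submodule.Quotient.mk m := by
    intro m; rw [hq, Submodule.mapQ_apply, LinearMap.id_apply]
  -- the ambient K-vector space
  set LA : Submodule K (K ⊗[𝓞 K] M₀) :=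
    Submodule.span K ((fun j => (1 : K) ⊗ₜ[𝓞 K] v j) '' (A : Set ι)) with hLA
  set θ0 : M₀ →ₗ[𝓞 K] ((K ⊗[𝓞 K] M₀) ⧸ LA) :=
    (LA.mkQ.restrictScalars (𝓞 K)).comp ((TensorProduct.mk (𝓞 K) K M₀) 1) with hθ0
  have hθ0_apply : ∀ m : M₀, θ0 m = LA.mkQ ((1 : K) ⊗ₜ[𝓞 K] m) := fun m => rfl
  set θ : (M₀ ⧸ S₀) →ₗ[𝓞 K] ((K ⊗[𝓞 K] M₀) ⧸ LA) :=
    Submodule.liftQ S₀ θ0 (by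
      rw [hS₀, Submodule.span_le]
      rintro x ⟨j, hj, rfl⟩
      rw [SetLike.mem_coe, LinearMap.mem_ker, hθ0_apply, Submodule.mkQ_apply,
        Submodule.Quotient.mk_eq_zero]
      exact Submodule.subset_span ⟨j, hj, rfl⟩) with hθ
  have hθ_mk : ∀ m : M₀, θ (Submodule.Quotient.mk m) = LA.mkQ ((1 : K) ⊗ₜ[𝓞 K] m) := by
    intro m; rw [hθ, Submodule.liftQ_apply, hθ0_apply]
  have halg : Function.Injective (algebraMap (𝓞 K) K) := IsFractionRing.injective (𝓞 K) K
  have hsub : (A : Set ι) ⊆ (({i}ᶜ : Finset ι) : Set ι) := by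
    intro x hx
    simp only [Finset.coe_compl, Set.mem_compl_iff, Finset.coe_singleton,
      Set.mem_singleton_iff]
    rintro rfl
    exact hA hx
  have hLAle : LA ≤ Submodule.span K
      ((fun j => (1 : K) ⊗ₜ[𝓞 K] v j) '' (({i}ᶜ : Finset ι) : Set ι)) :=
    Submodule.span_mono (Set.image_mono hsub)
  -- (a) core injectivity fact
  have hcore : ∀ c : 𝓞 K, c • v i ∈ S₀ → c = 0 := by
    intro c hc
    by_contra hc0
    have h1 := map_spanR_mem ((TensorProduct.mk (𝓞 K) K M₀) 1) (v '' (A : Set ι)) hc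
    rw [TensorProduct.mk_apply, TensorProduct.tmul_smul,
      ← algebraMap_smul K c ((1 : K) ⊗ₜ[𝓞 K] v i)] at h1
    have himg : ((TensorProduct.mk (𝓞 K) K M₀) 1) '' (v '' (A : Set ι)) =
        (fun j => (1 : K) ⊗ₜ[𝓞 K] v j) '' (A : Set ι) := by
      rw [Set.image_image]; rfl
    rw [himg] at h1
    have hc1 : algebraMap (𝓞 K) K c ≠ 0 := fun hz => hc0 (halg (by rw [hz, map_zero]))
    have h2 := Submodule.smul_mem _ (algebraMap (𝓞 K) K c)⁻¹ h1
    rw [inv_smul_smul₀ hc1] at h2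
    exact h (hLAle h2)
  -- (b) kernel description of q
  have hker : ∀ y : M₀ ⧸ S₀, q y = 0 → ∃ c : 𝓞 K, y = c • Submodule.Quotient.mk (v i) := by
    intro y hy
    obtain ⟨m, rfl⟩ := S₀.mkQ_surjective y
    rw [Submodule.mkQ_apply, hq_mk, Submodule.Quotient.mk_eq_zero] at hy
    rw [hS₁, Finset.coe_insert, Set.image_insert_eq, Submodule.span_insert] at hy
    obtain ⟨z, hz, u, hu, rfl⟩ := Submodule.mem_sup.mp hy
    obtain ⟨c, rfl⟩ := Submodule.mem_span_singleton.mp hz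
    refine ⟨c, ?_⟩
    rw [Submodule.mkQ_apply, Submodule.Quotient.mk_add, ← Submodule.Quotient.mk_smul,
      (Submodule.Quotient.mk_eq_zero _).mpr (show u ∈ S₀ from hu)]
    rw [add_zero]
  -- torsion transfer map
  have htor : ∀ t : M₀ ⧸ S₀, t ∈ Submodule.torsion (𝓞 K) (M₀ ⧸ S₀) →
      q t ∈ Submodule.torsion (𝓞 K) (M₀ ⧸ S₁) := by
    intro t ht
    obtain ⟨a, ha⟩ := (Submodule.mem_torsion_iff _).mp ht
    exact (Submodule.mem_torsion_iff _).mpr ⟨a, by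
      rw [Submonoid.smul_def] at ha ⊢
      rw [← map_smul, ha, map_zero]⟩
  set F : Submodule.torsion (𝓞 K) (M₀ ⧸ S₀) → Submodule.torsion (𝓞 K) (M₀ ⧸ S₁) :=
    fun t => ⟨q t.1, htor t.1 t.2⟩ with hF
  -- injectivity
  have hFinj : Function.Injective F := by
    intro t t' htt
    have h1 : q (t.1 - t'.1) = 0 := by
      rw [map_sub, sub_eq_zero]
      exact congrArg Subtype.val htt
    obtain ⟨c, hc⟩ := hker _ h1
    have h2 : t.1 - t'.1 ∈ Submodule.torsion (𝓞 K) (M₀ ⧸ S₀) := sub_mem t.2 t'.2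
    obtain ⟨a, ha⟩ := (Submodule.mem_torsion_iff _).mp h2
    rw [Submonoid.smul_def, hc, smul_smul] at ha
    rw [← Submodule.Quotient.mk_smul, Submodule.Quotient.mk_eq_zero] at ha
    have hc0 : (a : 𝓞 K) * c = 0 := hcore _ ha
    have ha0 : (a : 𝓞 K) ≠ 0 := nonZeroDivisors.coe_ne_zero a
    have : c = 0 := by
      rcases mul_eq_zero.mp hc0 with h' | h'
      · exact absurd h' ha0
      · exact h'
    rw [this, zero_smul, sub_eq_zero] at hc
    exact Subtype.ext hc

  -- the coloop vector image is outside the span of the others in the quotient space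
  have hθw : LA.mkQ ((1 : K) ⊗ₜ[𝓞 K] v i) ∉
      Submodule.span K (θ0 '' (v '' (({i}ᶜ : Finset ι) : Set ι))) := by
    intro hmem
    have him : θ0 '' (v '' (({i}ᶜ : Finset ι) : Set ι)) =
        LA.mkQ '' ((fun j => (1 : K) ⊗ₜ[𝓞 K] v j) '' (({i}ᶜ : Finset ι) : Set ι)) := by
      rw [Set.image_image, Set.image_image]
      rfl
    rw [him, ← Submodule.map_span] at hmem
    obtain ⟨z, hz, hzeq⟩ := Submodule.mem_map.mp hmem
    have hsubmem : (1 : K) ⊗ₜ[𝓞 K] v i - z ∈ LA := by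
      rw [← Submodule.Quotient.eq]
      rw [Submodule.mkQ_apply, Submodule.mkQ_apply] at hzeq
      exact hzeq.symm
    have : (1 : K) ⊗ₜ[𝓞 K] v i = ((1 : K) ⊗ₜ[𝓞 K] v i - z) + z := by abel
    rw [this] at h
    exact h (add_mem (hLAle hsubmem) hz)
  have hq_surj : Function.Surjective q := by
    intro y
    obtain ⟨m, rfl⟩ := S₁.mkQ_surjective y
    exact ⟨Submodule.Quotient.mk m, by rw [hq_mk m, Submodule.mkQ_apply]⟩
  have hdecomp : ∀ m : M₀, ∃ (c' : 𝓞 K) (u : M₀),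
      u ∈ Submodule.span (𝓞 K) (v '' (({i}ᶜ : Finset ι) : Set ι)) ∧ m = c' • v i + u := by
    intro m
    have hm : m ∈ Submodule.span (𝓞 K) (Set.range v) := by rw [hgen]; trivial
    have hrange : Set.range v = insert (v i) (v '' (({i}ᶜ : Finset ι) : Set ι)) := by
      ext x
      simp only [Set.mem_range, Set.mem_insert_iff, Set.mem_image]
      constructor
      · rintro ⟨j, rfl⟩
        by_cases hj : j = i
        · subst hj; left; rfl
        · right
          exact ⟨j, by simp [hj], rfl⟩
      · rintro (rfl | ⟨j, _, rfl⟩) <;> exact ⟨_, rfl⟩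
    rw [hrange, Submodule.span_insert] at hm
    obtain ⟨z, hz, u, hu, rfl⟩ := Submodule.mem_sup.mp hm
    obtain ⟨c', rfl⟩ := Submodule.mem_span_singleton.mp hz
    exact ⟨c', u, hu, rfl⟩
  have hFsurj : Function.Surjective F := by
    rintro ⟨y, hy⟩
    obtain ⟨a, ha⟩ := (Submodule.mem_torsion_iff _).mp hy
    rw [Submonoid.smul_def] at ha
    obtain ⟨x, hx⟩ := hq_surj y
    have h1 : q ((a : 𝓞 K) • x) = 0 := by rw [map_smul, hx, ha]
    obtain ⟨c, hc⟩ := hker _ h1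
    obtain ⟨m, rfl⟩ := S₀.mkQ_surjective x
    obtain ⟨c', u, hu, hm⟩ := hdecomp m
    rw [Submodule.mkQ_apply] at hc
    have hmk : (Submodule.Quotient.mk m : M₀ ⧸ S₀) =
        c' • Submodule.Quotient.mk (v i) + Submodule.Quotient.mk u := by
      rw [hm, Submodule.Quotient.mk_add, Submodule.Quotient.mk_smul]
    have h2 : (a : 𝓞 K) • (c' • (Submodule.Quotient.mk (v i) : M₀ ⧸ S₀) +
        Submodule.Quotient.mk u) = c • Submodule.Quotient.mk (v i) := by
      rw [← hmk]
      exact hc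
    have heq : (a : 𝓞 K) • (Submodule.Quotient.mk u : M₀ ⧸ S₀) =
        (c - (a : 𝓞 K) * c') • Submodule.Quotient.mk (v i) := by
      rw [smul_add, smul_smul] at h2
      rw [sub_smul, ← h2]
      abel
    have h4 : (a : 𝓞 K) • θ (Submodule.Quotient.mk u) =
        (c - (a : 𝓞 K) * c') • θ (Submodule.Quotient.mk (v i)) := by
      rw [← map_smul, heq, map_smul]
    have humem : θ (Submodule.Quotient.mk u) ∈
        Submodule.span K (θ0 '' (v '' (({i}ᶜ : Finset ι) : Set ι))) := by
      have : θ (Submodule.Quotient.mk u) = θ0 u := by rw [hθ, Submodule.liftQ_apply]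
      rw [this]
      exact map_spanR_mem θ0 _ hu
    have h5 : c - (a : 𝓞 K) * c' = 0 := by
      by_contra h5
      have halg5 : algebraMap (𝓞 K) K (c - (a : 𝓞 K) * c') ≠ 0 :=
        fun hz => h5 (halg (by rw [hz, map_zero]))
      have h6 : θ (Submodule.Quotient.mk (v i)) ∈
          Submodule.span K (θ0 '' (v '' (({i}ᶜ : Finset ι) : Set ι))) := by
        have h7 := Submodule.smul_of_tower_mem
          (Submodule.span K (θ0 '' (v '' (({i}ᶜ : Finset ι) : Set ι)))) (a : 𝓞 K) humem
        rw [h4, ← algebraMap_smul K (c - (a : 𝓞 K) * c')] at h7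
        have h8 := Submodule.smul_mem _ (algebraMap (𝓞 K) K (c - (a : 𝓞 K) * c'))⁻¹ h7
        rwa [inv_smul_smul₀ halg5] at h8
      rw [hθ_mk] at h6
      exact hθw h6
    have hca : c = (a : 𝓞 K) * c' := by
      have := sub_eq_zero.mp h5
      exact this
    set t : M₀ ⧸ S₀ := Submodule.Quotient.mk m - c' • Submodule.Quotient.mk (v i) with htdef
    have htt : t ∈ Submodule.torsion (𝓞 K) (M₀ ⧸ S₀) := by
      refine (Submodule.mem_torsion_iff _).mpr ⟨a, ?_⟩
      rw [Submonoid.smul_def, htdef, smul_sub, hc, hca, mul_smul, ← smul_sub, sub_self,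
        smul_zero]
    refine ⟨⟨t, htt⟩, Subtype.ext ?_⟩
    show q t = y
    rw [htdef, map_sub, map_smul]
    have hqvi : q (Submodule.Quotient.mk (v i)) = 0 := by
      rw [hq_mk, Submodule.Quotient.mk_eq_zero]
      exact hvi1
    rw [hqvi, smul_zero, sub_zero, ← Submodule.mkQ_apply, hx]
  rw [mFun, mFun]
  exact Nat.card_eq_of_bijective F ⟨hFinj, hFsurj⟩

end Main

end TutteColoop

theorem tuttePoly_coloop
    (K : Type) [Field K] [NumberField K]
    (ι : Type) [Fintype ι] [DecidableEq ι]
    (M₀ : Type) [AddCommGroup M₀] [Module (𝓞 K) M₀] [Module.Finite (𝓞 K) M₀]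
    (v : ι → M₀)
    (hgen : Submodule.span (𝓞 K) (Set.range v) = ⊤)
    (i : ι)
    (hcoloop : rkFun K v {i}ᶜ + 1 = rkFun K v Finset.univ) :
    tuttePoly K v =
      MvPolynomial.X 0 * tuttePoly K (fun j : {j : ι // j ≠ i} =>
        (Submodule.Quotient.mk (v (j : ι)) : M₀ ⧸ Submodule.span (𝓞 K) {v i})) := by
  classical
  show tuttePoly K v = MvPolynomial.X 0 * tuttePoly K (TutteColoop.vq K v i)
  set w := TutteColoop.vq K v i with hw
  have hK1 : ∀ (A : Finset ι), i ∉ A →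
      (1 : K) ⊗ₜ[𝓞 K] v i ∉ Submodule.span K ((fun j => (1 : K) ⊗ₜ[𝓞 K] v j) '' (A : Set ι)) :=
    fun A hA => TutteColoop.tv_not_mem K v i hcoloop hA
  have hrk : ∀ B : Finset {j : ι // j ≠ i}, rkFun K w B = rkFun K v (TutteColoop.emb i B) :=
    fun B => TutteColoop.rk_vq K v i B (hK1 _ (TutteColoop.not_mem_emb i B))
  have hrkins : ∀ B : Finset {j : ι // j ≠ i},
      rkFun K v (insert i (TutteColoop.emb i B)) = rkFun K w B + 1 := by
    intro B
    rw [hrk B]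
    exact TutteColoop.rk_insert K v i (hK1 _ (TutteColoop.not_mem_emb i B))
      (TutteColoop.not_mem_emb i B)
  have hruniv : rkFun K v Finset.univ = rkFun K w Finset.univ + 1 := by
    have h1 := hrk Finset.univ
    rw [TutteColoop.emb_univ] at h1
    omega
  have hm1 : ∀ B : Finset {j : ι // j ≠ i},
      mFun K w B = mFun K v (insert i (TutteColoop.emb i B)) :=
    fun B => TutteColoop.mFun_vq K v i B
  have hm0 : ∀ B : Finset {j : ι // j ≠ i},
      mFun K v (TutteColoop.emb i B) = mFun K v (insert i (TutteColoop.emb i B)) :=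
    fun B => TutteColoop.mFun_insert K v i hgen (TutteColoop.not_mem_emb i B)
      (hK1 _ (by simp))
  have hle : ∀ B : Finset {j : ι // j ≠ i}, rkFun K w B ≤ rkFun K w Finset.univ :=
    fun B => TutteColoop.rk_mono K w (Finset.subset_univ B)
  rw [tuttePoly, tuttePoly, Finset.mul_sum]
  rw [← Finset.sum_filter_add_sum_filter_not Finset.univ (fun A : Finset ι => i ∈ A)]
  set f : Finset ι → MvPolynomial (Fin 2) ℤ := fun A =>
    (mFun K v A : MvPolynomial (Fin 2) ℤ) *
      (MvPolynomial.X 0 - 1) ^ (rkFun K v Finset.univ - rkFun K v A) *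
      (MvPolynomial.X 1 - 1) ^ (A.card - rkFun K v A) with hf
  have hsub : ∀ B : Finset {j : ι // j ≠ i},
      Finset.subtype (fun j => j ≠ i) (TutteColoop.emb i B) = B := by
    intro B
    ext j
    simp only [Finset.mem_subtype, TutteColoop.emb, Finset.mem_map,
      Function.Embedding.coe_subtype, Subtype.exists, exists_and_right, exists_eq_right]
    exact ⟨fun ⟨_, h⟩ => h, fun h => ⟨j.2, h⟩⟩
  have hsum1 : ∑ A ∈ Finset.univ.filter (fun A : Finset ι => i ∈ A), f A =
      ∑ B : Finset {j : ι // j ≠ i}, f (insert i (TutteColoop.emb i B)) := by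
    refine Finset.sum_bij' (fun A _ => Finset.subtype (fun j => j ≠ i) (A.erase i))
      (fun B _ => insert i (TutteColoop.emb i B)) (fun A ha => Finset.mem_univ _)
      (fun B _ => by simp) ?_ ?_ ?_
    · intro A hA
      simp only [Finset.mem_filter] at hA
      exact TutteColoop.emb_subtype_erase i A hA.2
    · intro B _
      show Finset.subtype (fun j => j ≠ i) ((insert i (TutteColoop.emb i B)).erase i) = B
      rw [Finset.erase_insert (TutteColoop.not_mem_emb i B)]
      exact hsub B
    · intro A hA
      simp only [Finset.mem_filter] at hA
      show f A = f (insert i (TutteColoop.emb i (Finset.subtype (fun j => j ≠ i) (A.erase i))))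
      rw [TutteColoop.emb_subtype_erase i A hA.2]
  have hsum0 : ∑ A ∈ Finset.univ.filter (fun A : Finset ι => ¬ i ∈ A), f A =
      ∑ B : Finset {j : ι // j ≠ i}, f (TutteColoop.emb i B) := by
    refine Finset.sum_bij' (fun A _ => Finset.subtype (fun j => j ≠ i) A)
      (fun B _ => TutteColoop.emb i B) (fun A ha => Finset.mem_univ _)
      (fun B _ => by simpa using TutteColoop.not_mem_emb i B) ?_ ?_ ?_
    · intro A hA
      simp only [Finset.mem_filter] at hA
      exact TutteColoop.emb_subtype i A hA.2
    · intro B _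
      exact hsub B
    · intro A hA
      simp only [Finset.mem_filter] at hA
      show f A = f (TutteColoop.emb i (Finset.subtype (fun j => j ≠ i) A))
      rw [TutteColoop.emb_subtype i A hA.2]
  rw [hsum1, hsum0, ← Finset.sum_add_distrib]
  refine Finset.sum_congr rfl fun B _ => ?_
  have hcard1 : (insert i (TutteColoop.emb i B)).card = B.card + 1 := by
    rw [Finset.card_insert_of_notMem (TutteColoop.not_mem_emb i B), TutteColoop.card_emb]
  have hcard0 : (TutteColoop.emb i B).card = B.card := TutteColoop.card_emb i B
  have hrkB := hrk B
  have hrkiB := hrkins B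
  have hleB := hle B
  rw [hf]
  simp only [hm0 B, ← hm1 B, hcard1, hcard0, hrkiB, hruniv, ← hrkB]
  have e1 : rkFun K w Finset.univ + 1 - (rkFun K w B + 1) = rkFun K w Finset.univ - rkFun K w B :=
    by omega
  have e2 : B.card + 1 - (rkFun K w B + 1) = B.card - rkFun K w B := by omega
  have e3 : rkFun K w Finset.univ + 1 - rkFun K w B = (rkFun K w Finset.univ - rkFun K w B) + 1 :=
    by omega
  rw [e1, e2, e3]
  ring
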